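/- Let λ ∈ ℂ with λ ≠ 0 and λ ≠ 1, and let φ be an automorphism of the group G(λ). If (g₁,g₂) is a generating pair of G(λ), then (σ(φ(g₁)), σ(φ(g₂))) equals (σ(g₁), σ(g₂)) or (−σ(g₁), −σ(g₂)), where σ : G(λ) → ℤ is the projection (r,k) ↦ k. -/

import Mathlib

/-- The semidirect product `R ⋊_u ℤ`: underlying set `R × ℤ` with multiplication
`(r, k) · (r', k') = (r + u^k · r', k + k')`, where `u` is a unit of the commutative ring
`R`. -/
def SDP (R : Type*) [CommRing R] (u : Rˣ) : Type _ := R × ℤ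

namespace SDP

variable {R : Type*} [CommRing R] {u : Rˣ}

instance : Mul (SDP R u) := ⟨fun g h => (g.1 + ((u ^ g.2 : Rˣ) : R) * h.1, g.2 + h.2)⟩
instance : One (SDP R u) := ⟨((0 : R), (0 : ℤ))⟩
instance : Inv (SDP R u) := ⟨fun g => (-(((u ^ (-g.2) : Rˣ) : R) * g.1), -g.2)⟩

theorem mul_def (g h : SDP R u) :
    g * h = (g.1 + ((u ^ g.2 : Rˣ) : R) * h.1, g.2 + h.2) := rfl
theorem one_def : (1 : SDP R u) = ((0 : R), (0 : ℤ)) := rfl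
theorem inv_def (g : SDP R u) : g⁻¹ = (-(((u ^ (-g.2) : Rˣ) : R) * g.1), -g.2) := rfl

instance instGroup : Group (SDP R u) where
  mul_assoc a b c := by
    rw [mul_def, mul_def, mul_def, mul_def]
    refine Prod.ext ?_ ?_
    · show (a.1 + ↑(u ^ a.2) * b.1) + ↑(u ^ (a.2 + b.2)) * c.1
        = a.1 + ↑(u ^ a.2) * (b.1 + ↑(u ^ b.2) * c.1)
      rw [zpow_add]; push_cast; ring
    · show (a.2 + b.2) + c.2 = a.2 + (b.2 + c.2); omega
  one_mul a := by
    rw [mul_def]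
    refine Prod.ext ?_ ?_
    · show (0 : R) + ↑(u ^ (0 : ℤ)) * a.1 = a.1; simp
    · show (0 : ℤ) + a.2 = a.2; omega
  mul_one a := by
    rw [mul_def]
    refine Prod.ext ?_ ?_
    · show a.1 + ↑(u ^ a.2) * (0 : R) = a.1; simp
    · show a.2 + (0 : ℤ) = a.2; omega
  inv_mul_cancel a := by
    rw [mul_def]
    refine Prod.ext ?_ ?_
    · show -(↑(u ^ (-a.2)) * a.1) + ↑(u ^ (-a.2)) * a.1 = (0 : R); simp
    · show -a.2 + a.2 = (0 : ℤ); omega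

end SDP
/-- `R_λ = ℤ[λ, λ⁻¹]`, the smallest subring of `ℂ` containing `λ` and `λ⁻¹`. -/
def Rring (l : ℂ) : Subring ℂ := Subring.closure {l, l⁻¹}

/-- `λ` as a unit of `R_λ` (for `λ ≠ 0`). -/
noncomputable def Runit (l : ℂ) (hl : l ≠ 0) : (Rring l)ˣ where
  val := ⟨l, Subring.subset_closure (by simp)⟩
  inv := ⟨l⁻¹, Subring.subset_closure (by simp)⟩
  val_inv := Subtype.ext (mul_inv_cancel₀ hl)
  inv_val := Subtype.ext (inv_mul_cancel₀ hl)

/-- `G(λ) = R_λ ⋊ ℤ`, where the generator `1 ∈ ℤ` acts by multiplication by `λ`: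
the set `R_λ × ℤ` with multiplication `(r, k) · (r', k') = (r + λ^k r', k + k')`. -/
noncomputable def Gl (l : ℂ) (hl : l ≠ 0) : Type := SDP (Rring l) (Runit l hl)

noncomputable instance (l : ℂ) (hl : l ≠ 0) : Group (Gl l hl) :=
  inferInstanceAs (Group (SDP (Rring l) (Runit l hl)))


-- auxiliary development
namespace GlAux

variable (l : ℂ) (hl : l ≠ 0)

/-- element constructor -/
def el (x : Rring l) (k : ℤ) : Gl l hl := (x, k)

variable {l hl}

lemma el_fst (x : Rring l) (k : ℤ) : (el l hl x k).1 = x := rfl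
lemma el_snd (x : Rring l) (k : ℤ) : (el l hl x k).2 = k := rfl

lemma el_eta (g : Gl l hl) : el l hl g.1 g.2 = g := rfl

lemma val_upow (k : ℤ) : (((Runit l hl ^ k : (Rring l)ˣ) : Rring l) : ℂ) = l ^ k := by
  have h1 : Units.map (Rring l).subtype.toMonoidHom (Runit l hl ^ k)
      = (Units.map (Rring l).subtype.toMonoidHom (Runit l hl)) ^ k := map_zpow _ _ _
  have h2 := congrArg Units.val h1
  simp only [Units.coe_map, Units.val_zpow_eq_zpow_val] at h2
  exact h2

lemma el_mul (x y : Rring l) (a b : ℤ) :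
    el l hl x a * el l hl y b = el l hl (x + ((Runit l hl ^ a : (Rring l)ˣ) : Rring l) * y) (a + b) := rfl

lemma el_inv (x : Rring l) (a : ℤ) :
    (el l hl x a)⁻¹ = el l hl (-(((Runit l hl ^ (-a) : (Rring l)ˣ) : Rring l) * x)) (-a) := rfl

lemma snd_mul (g h : Gl l hl) : (g * h).2 = g.2 + h.2 := rfl
lemma snd_inv (g : Gl l hl) : (g⁻¹).2 = -g.2 := rfl
lemma snd_one : (1 : Gl l hl).2 = 0 := rfl

/-- coercion-level extensionality -/
lemma gl_ext {g h : Gl l hl} (h1 : (g.1 : ℂ) = (h.1 : ℂ)) (h2 : g.2 = h.2) : g = h :=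
  Prod.ext (Subtype.ext h1) h2

/-- conjugation of an A-element -/
lemma conj_el (a : Gl l hl) (x : Rring l) :
    a * el l hl x 0 * a⁻¹ = el l hl (((Runit l hl ^ a.2 : (Rring l)ˣ) : Rring l) * x) 0 := by
  refine gl_ext ?_ ?_
  · show ((a * el l hl x 0 * a⁻¹).1 : ℂ) = _
    erw [SDP.mul_def, SDP.mul_def, SDP.inv_def]
    push_cast [val_upow, el_fst, el_snd]
    have hz : l ^ a.2 * l ^ (-a.2) = 1 := by rw [← zpow_add₀ hl]; simp
    have h0 : l ^ a.2 ≠ 0 := zpow_ne_zero _ hl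
    simp only [zpow_neg]
    field_simp
    ring
  · simp only [snd_mul, snd_inv, el_snd]; omega

end GlAux

namespace GlAux
variable {l : ℂ} {hl : l ≠ 0}

lemma upow_zero : ((Runit l hl ^ (0:ℤ) : (Rring l)ˣ) : Rring l) = 1 := by
  norm_num

lemma elA_mul (x y : Rring l) : el l hl x 0 * el l hl y 0 = el l hl (x + y) 0 := by
  rw [el_mul, upow_zero]; norm_num

lemma decomp (g : Gl l hl) : g = el l hl g.1 0 * el l hl 0 g.2 := by
  rw [el_mul, upow_zero]
  refine gl_ext ?_ ?_ <;> simp [el_fst, el_snd]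

lemma el_zero_zero : el l hl 0 0 = 1 := rfl

lemma el_zero_mul (a b : ℤ) : el l hl 0 a * el l hl 0 b = el l hl 0 (a + b) := by
  rw [el_mul]; norm_num

end GlAux

namespace GlAux
variable {l : ℂ} {hl : l ≠ 0}

lemma conj_by_A (y : Rring l) (g : Gl l hl) :
    el l hl y 0 * g * (el l hl y 0)⁻¹
      = el l hl (y + g.1 - ((Runit l hl ^ g.2 : (Rring l)ˣ) : Rring l) * y) g.2 := by
  refine gl_ext ?_ ?_
  · show ((el l hl y 0 * g * (el l hl y 0)⁻¹).1 : ℂ) = _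
    erw [SDP.mul_def, SDP.mul_def, SDP.inv_def]
    push_cast [val_upow, el_fst, el_snd]
    have h0 : l ^ (-(0:ℤ)) = 1 := by norm_num
    have h0' : l ^ (0:ℤ) = 1 := by norm_num
    simp only [h0, h0', one_mul, mul_one]
    ring
  · simp only [snd_mul, snd_inv, el_snd]; omega

lemma ka (hl1 : l ≠ 1) (φ : Gl l hl ≃* Gl l hl) (x : Rring l) :
    (φ (el l hl x 0)).2 = 0 := by
  set Λ : Rring l := ((Runit l hl : (Rring l)ˣ) : Rring l) with hΛ
  have hΛc : ((Λ : Rring l) : ℂ) = l := rfl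
  -- the additive map F
  set F : Rring l →+ ℤ :=
    { toFun := fun y => (φ (el l hl y 0)).2
      map_zero' := by
        show (φ (el l hl 0 0)).2 = 0
        rw [el_zero_zero, map_one, snd_one]
      map_add' := by
        intro a b
        show (φ (el l hl (a + b) 0)).2 = _
        rw [← elA_mul, map_mul, snd_mul] } with hF
  have hF1 : ∀ y : Rring l, F (Λ * y) = F y := by
    intro y
    have h1 : el l hl (Λ * y) 0 = el l hl 0 1 * el l hl y 0 * (el l hl 0 1)⁻¹ := by
      rw [conj_el]
      congr 2
      rw [el_snd, zpow_one]
    show (φ (el l hl (Λ * y) 0)).2 = (φ (el l hl y 0)).2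
    rw [h1, map_mul, map_mul, map_inv, snd_mul, snd_mul, snd_inv]
    omega
  have hke : ∀ y : Rring l, F ((1 - Λ) * y) = 0 := by
    intro y
    have h2 : (1 - Λ) * y = y - Λ * y := by ring
    rw [h2, map_sub, hF1 y, sub_self]
  suffices hFx : F x = 0 by exact hFx
  by_cases hroot : ∃ n : ℕ, 0 < n ∧ l ^ n = 1
  · obtain ⟨n, hn, hln⟩ := hroot
    have hl1' : l - 1 ≠ 0 := sub_ne_zero.mpr hl1
    have hgeo : (∑ i ∈ Finset.range n, l ^ i) = 0 := by
      have h3 := geom_sum_mul l n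
      rw [hln, sub_self] at h3
      rcases mul_eq_zero.mp h3 with h | h
      · exact h
      · exact absurd h hl1'
    have key : (n : Rring l) = (1 - Λ) * (∑ i ∈ Finset.range n, ∑ j ∈ Finset.range i, Λ ^ j) := by
      apply Subtype.ext
      push_cast [hΛc]
      rw [Finset.mul_sum]
      have h4 : ∀ i ∈ Finset.range n, (1 - l) * (∑ j ∈ Finset.range i, l ^ j) = 1 - l ^ i := by
        intro i _
        have h5 := geom_sum_mul l i
        linear_combination -h5
      rw [Finset.sum_congr rfl h4, Finset.sum_sub_distrib, hgeo, Finset.sum_const,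
        Finset.card_range, sub_zero, nsmul_eq_mul, mul_one]
    have h6 : (n : ℤ) * F x = 0 := by
      have h7 : F ((n : Rring l) * x) = 0 := by
        rw [key, mul_assoc]; exact hke _
      have h8 : (n : Rring l) * x = n • x := by rw [nsmul_eq_mul]
      rw [h8, map_nsmul] at h7
      simpa [nsmul_eq_mul] using h7
    have hn0 : (n : ℤ) ≠ 0 := by exact_mod_cast hn.ne'
    exact (mul_eq_zero.mp h6).resolve_left hn0
  · by_contra hk
    set g := φ (el l hl x 0) with hg
    set k := g.2 with hk'
    have hkne : k ≠ 0 := hk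
    have hlk : l ^ k ≠ 1 := by
      intro h
      apply hroot
      refine ⟨k.natAbs, Int.natAbs_pos.mpr hkne, ?_⟩
      rcases Int.natAbs_eq k with he | he
      · rw [← zpow_natCast, ← he, h]
      · have h9 : l ^ (-(k.natAbs : ℤ)) = 1 := by rw [← he]; exact h
        rw [zpow_neg, inv_eq_one] at h9
        rw [← zpow_natCast]; exact h9
    set m := (φ.symm (el l hl 1 0)).2 with hm
    have hc : el l hl 1 0 * g * (el l hl 1 0)⁻¹
        = φ (el l hl (((Runit l hl ^ m : (Rring l)ˣ) : Rring l) * x) 0) := by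
      conv_lhs => rw [hg, show el l hl 1 0 = φ (φ.symm (el l hl 1 0)) from (φ.apply_symm_apply _).symm]
      rw [← map_inv, ← map_mul, ← map_mul, conj_el]
    have hcomm : (el l hl 1 0 * g * (el l hl 1 0)⁻¹) * g = g * (el l hl 1 0 * g * (el l hl 1 0)⁻¹) := by
      rw [hc, hg, ← map_mul, ← map_mul]
      congr 1
      rw [elA_mul, elA_mul, add_comm]
    set Uk : Rring l := ((Runit l hl ^ k : (Rring l)ˣ) : Rring l) with hUk
    have hcomm' : el l hl (1 + g.1 - Uk) k * el l hl g.1 k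
        = el l hl g.1 k * el l hl (1 + g.1 - Uk) k := by
      have he : g = el l hl g.1 k := rfl
      have h10 := hcomm
      rw [conj_by_A] at h10
      rw [mul_one] at h10
      convert h10 using 3 <;> rfl
    have h1 := congrArg (fun t : Gl l hl => ((t.1 : Rring l) : ℂ)) hcomm'
    simp only [el_mul, el_fst] at h1
    push_cast [val_upow] at h1
    rw [show ((Uk : Rring l) : ℂ) = l ^ k from val_upow k] at h1
    have hsq : (1 - l ^ k) ^ 2 = 0 := by linear_combination h1
    have h11 : (1 : ℂ) - l ^ k = 0 := pow_eq_zero_iff (two_ne_zero) |>.mp hsq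
    exact hlk (by linear_combination -h11)

end GlAux

namespace GlAux
variable {l : ℂ} {hl : l ≠ 0}

lemma sigma_phi (hl1 : l ≠ 1) (φ : Gl l hl ≃* Gl l hl) (g : Gl l hl) :
    (φ g).2 = (φ (el l hl 0 1)).2 * g.2 := by
  have hz : ∀ k : ℤ, (φ (el l hl 0 k)).2 = (φ (el l hl 0 1)).2 * k := by
    intro k
    induction k using Int.induction_on with
    | zero => rw [el_zero_zero, map_one, snd_one, mul_zero]
    | succ i ih =>
        have h1 : el l hl 0 ((i : ℤ) + 1) = el l hl 0 i * el l hl 0 1 := by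
          rw [el_zero_mul]
        rw [h1, map_mul, snd_mul, ih]; ring
    | pred i ih =>
        have h1 : el l hl 0 (-(i : ℤ) - 1) = el l hl 0 (-i) * (el l hl 0 1)⁻¹ := by
          rw [eq_mul_inv_iff_mul_eq, el_zero_mul]
          norm_num
        rw [h1, map_mul, map_inv, snd_mul, snd_inv, ih]; ring
  conv_lhs => rw [decomp g]
  rw [map_mul, snd_mul, ka hl1 φ g.1, hz g.2, zero_add]

end GlAux

/-- Let `λ ∈ ℂ` with `λ ≠ 0, 1` and let `φ` be an automorphism of `G(λ)`.  If `(g₁, g₂)` is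
a generating pair of `G(λ)`, then `(σ (φ g₁), σ (φ g₂))` equals `(σ g₁, σ g₂)` or
`(-σ g₁, -σ g₂)`, where `σ : G(λ) → ℤ` is the projection `(r, k) ↦ k`. -/
theorem sigma_automorphism_generating_pair
    (l : ℂ) (hl : l ≠ 0) (hl1 : l ≠ 1) (φ : Gl l hl ≃* Gl l hl)
    (g₁ g₂ : Gl l hl)
    (hg : Subgroup.closure ({g₁, g₂} : Set (Gl l hl)) = ⊤) :
    ((φ g₁).2, (φ g₂).2) = (g₁.2, g₂.2) ∨ ((φ g₁).2, (φ g₂).2) = (-g₁.2, -g₂.2) := by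
  classical
  set c := (φ (GlAux.el l hl 0 1)).2 with hc
  set c' := (φ.symm (GlAux.el l hl 0 1)).2 with hc'
  have h1 : (1 : ℤ) = c' * c := by
    have h2 := GlAux.sigma_phi hl1 φ.symm (φ (GlAux.el l hl 0 1))
    rw [φ.symm_apply_apply] at h2
    rw [GlAux.el_snd] at h2
    rw [h2, ← hc, ← hc']
  have hcu : c = 1 ∨ c = -1 := by
    have : IsUnit c := IsUnit.of_mul_eq_one c' (by linarith [h1, mul_comm c c'])
    exact Int.isUnit_iff.mp this
  rcases hcu with h | h
  · left
    refine Prod.ext ?_ ?_ <;> simp only []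
    · rw [GlAux.sigma_phi hl1 φ g₁, ← hc, h, one_mul]
    · rw [GlAux.sigma_phi hl1 φ g₂, ← hc, h, one_mul]
  · right
    refine Prod.ext ?_ ?_ <;> simp only []
    · rw [GlAux.sigma_phi hl1 φ g₁, ← hc, h, neg_one_mul]
    · rw [GlAux.sigma_phi hl1 φ g₂, ← hc, h, neg_one_mul]
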